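/- The n-dimensional Peano curve α : [0,1] → [0,1]^n, α(t) = (x_1(t), …, x_n(t)), is surjective: for every point (a_1, …, a_n) ∈ [0,1]^n there exists t ∈ [0,1] with x_i(t) = a_i for all i = 1,…,n. -/

import Mathlib

open scoped BigOperators ENNReal

/-- `Φ` : evaluation of a ternary digit sequence (digits at indices `1,2,3,…`). -/
noncomputable def Phi (t : ℕ → ℕ) : ℝ := ∑' k : ℕ, (t (k + 1) : ℝ) / 3 ^ (k + 1)

/-- A sequence of ternary digits (elements of `D = {0,1,2}`). -/
def IsDigitSeq (t : ℕ → ℕ) : Prop := ∀ k, t k ≤ 2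

/-- `S_{i+jn}(𝐭) = ∑_{k=1}^{i+jn} t_k − ∑_{s=0}^{j} t_{i+sn}`. -/
def S (n i j : ℕ) (t : ℕ → ℕ) : ℤ :=
  (∑ k ∈ Finset.Icc 1 (i + j * n), (t k : ℤ)) -
    ∑ s ∈ Finset.range (j + 1), (t (i + s * n) : ℤ)

/-- The operator `ξ(a) = 2 − a`, as a permutation of `ℝ` (so that integer powers
`ξ^m`, `m : ℤ`, make sense). -/
def xiPerm : Equiv.Perm ℝ :=
  ⟨fun a => 2 - a, fun a => 2 - a, fun a => by dsimp; ring, fun a => by dsimp; ring⟩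

/-- `x_i(𝐭) = ∑_{j=0}^∞ ξ^{S_{i+jn}(𝐭)}(t_{i+jn}) / 3^{j+1}`. -/
noncomputable def xcoord (n i : ℕ) (t : ℕ → ℕ) : ℝ :=
  ∑' j : ℕ, ((xiPerm ^ (S n i j t)) ((t (i + j * n) : ℝ))) / 3 ^ (j + 1)

/-- The canonical ternary digit expansion of `t ∈ [0,1]` (all digits `2` for `t = 1`). -/
noncomputable def ternaryDigit (t : ℝ) (k : ℕ) : ℕ :=
  if t = 1 then 2 else (⌊t * 3 ^ k⌋).toNat % 3

/-- The `i`-th coordinate function of the `n`-dimensional Peano curve, as a function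
on `[0,1]` (via the canonical ternary representation; by well-definedness this agrees
with `xcoord` on any ternary representation). -/
noncomputable def peanoCoord (n i : ℕ) (t : ℝ) : ℝ := xcoord n i (ternaryDigit t)


lemma xiPerm_sq : xiPerm * xiPerm = 1 := by
  ext x
  simp [xiPerm, Equiv.Perm.mul_apply]

lemma xiPerm_zpow_apply (m : ℤ) (x : ℝ) :
    (xiPerm ^ m) x = if Even m then x else 2 - x := by
  have h2 : xiPerm ^ (2 : ℤ) = 1 := by
    rw [show (2:ℤ) = (2:ℕ) by norm_num, zpow_natCast, pow_two, xiPerm_sq]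
  have key : xiPerm ^ m = xiPerm ^ (m % 2) := by
    conv_lhs => rw [← Int.emod_add_mul_ediv m 2]
    rw [zpow_add, zpow_mul, h2, one_zpow, mul_one]
  rcases Int.even_or_odd m with he | ho
  · rw [if_pos he, key, Int.even_iff.mp he, zpow_zero, Equiv.Perm.one_apply]
  · rw [if_neg (Int.not_even_iff_odd.mpr ho), key, Int.odd_iff.mp ho, zpow_one]
    rfl

lemma summable_geom_c (c : ℝ) : Summable (fun k : ℕ => c / 3 ^ (k + 1)) := by
  have h : (fun k : ℕ => c / 3 ^ (k + 1)) = fun k : ℕ => (c / 3) * (1/3 : ℝ) ^ k := by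
    funext k; rw [pow_succ, one_div, inv_pow, div_eq_mul_inv, div_eq_mul_inv, mul_inv]; ring
  rw [h]
  exact (summable_geometric_of_lt_one (by norm_num) (by norm_num)).mul_left _

lemma tsum_geom_c (c : ℝ) : ∑' k : ℕ, c / 3 ^ (k + 1) = c / 2 := by
  have h : (fun k : ℕ => c / 3 ^ (k + 1)) = fun k : ℕ => (c / 3) * (1/3 : ℝ) ^ k := by
    funext k; rw [pow_succ, one_div, inv_pow, div_eq_mul_inv, div_eq_mul_inv, mul_inv]; ring
  rw [h, tsum_mul_left, tsum_geometric_of_lt_one (by norm_num) (by norm_num)]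
  norm_num
  ring

lemma summable_digit_aux {f : ℕ → ℝ} (hf : ∀ j, |f j| ≤ 2) :
    Summable (fun j => f j / 3 ^ (j + 1)) := by
  apply Summable.of_abs
  apply Summable.of_nonneg_of_le (fun j => abs_nonneg _) (fun j => ?_) (summable_geom_c 2)
  rw [abs_div, abs_of_nonneg (by positivity : (0:ℝ) ≤ 3 ^ (j+1))]
  exact div_le_div_of_nonneg_right (hf j) (by positivity) |>.trans_eq rfl

lemma summable_phi {t : ℕ → ℕ} (ht : ∀ k, 1 ≤ k → t k ≤ 2) :
    Summable (fun k : ℕ => (t (k + 1) : ℝ) / 3 ^ (k + 1)) := by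
  apply summable_digit_aux
  intro j
  rw [abs_of_nonneg (by positivity)]
  exact_mod_cast ht (j+1) (by omega)

lemma Phi_nonneg (t : ℕ → ℕ) : 0 ≤ Phi t :=
  tsum_nonneg fun k => by positivity

lemma Phi_le_one {t : ℕ → ℕ} (ht : ∀ k, 1 ≤ k → t k ≤ 2) : Phi t ≤ 1 := by
  have := Summable.tsum_le_tsum (f := fun k : ℕ => (t (k+1) : ℝ) / 3 ^ (k+1))
    (g := fun k : ℕ => (2:ℝ) / 3 ^ (k+1)) (fun k => by
      apply div_le_div_of_nonneg_right _ (by positivity)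
      exact_mod_cast ht (k+1) (by omega)) (summable_phi ht) (summable_geom_c 2)
  calc Phi t ≤ ∑' k : ℕ, (2:ℝ) / 3 ^ (k+1) := this
    _ = 1 := by rw [tsum_geom_c]; norm_num

lemma Phi_all_two {t : ℕ → ℕ} (ht : ∀ k, 1 ≤ k → t k = 2) : Phi t = 1 := by
  have : Phi t = ∑' k : ℕ, (2:ℝ) / 3 ^ (k+1) := by
    apply tsum_congr; intro k; rw [ht (k+1) (by omega)]; norm_num
  rw [this, tsum_geom_c]; norm_num

lemma Phi_lt_one {t : ℕ → ℕ} (ht : ∀ k, 1 ≤ k → t k ≤ 2) {k0 : ℕ} (hk0 : 1 ≤ k0)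
    (hne : t k0 ≠ 2) : Phi t < 1 := by
  have htk0 : (t k0 : ℝ) ≤ 1 := by
    have := ht k0 hk0
    have : t k0 ≤ 1 := by omega
    exact_mod_cast this
  set g : ℕ → ℝ := fun k => (2:ℝ) / 3 ^ (k+1) - (if k = k0 - 1 then (1:ℝ)/3^k0 else 0)
    with hg
  have hsumInd : Summable (fun k : ℕ => if k = k0 - 1 then (1:ℝ)/3^k0 else 0) :=
    (hasSum_ite_eq (k0-1) ((1:ℝ)/3^k0)).summable
  have hsumg : Summable g := (summable_geom_c 2).sub hsumInd
  have hle : ∀ k, (t (k+1) : ℝ) / 3 ^ (k+1) ≤ g k := by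
    intro k
    by_cases hk : k = k0 - 1
    · subst hk
      have hkk : k0 - 1 + 1 = k0 := by omega
      rw [hg]; simp only [if_pos rfl]
      rw [hkk]
      have : (t k0 : ℝ) / 3 ^ k0 ≤ 1 / 3 ^ k0 :=
        div_le_div_of_nonneg_right htk0 (by positivity)
      calc (t k0 : ℝ) / 3 ^ k0 ≤ 1 / 3 ^ k0 := this
        _ = 2 / 3 ^ k0 - 1 / 3 ^ k0 := by ring
    · rw [hg]; simp only [if_neg hk, sub_zero]
      apply div_le_div_of_nonneg_right _ (by positivity)
      exact_mod_cast ht (k+1) (by omega)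
  have h1 : Phi t ≤ ∑' k, g k := Summable.tsum_le_tsum hle (summable_phi ht) hsumg
  have h2 : ∑' k, g k = 1 - 1/3^k0 := by
    rw [hg, Summable.tsum_sub (summable_geom_c 2) hsumInd, tsum_geom_c, tsum_ite_eq]
    norm_num
  have h3 : (0:ℝ) < 1/3^k0 := by positivity
  linarith

/-- Splitting `Phi` at index `K`. -/
lemma Phi_split {t : ℕ → ℕ} (ht : ∀ k, 1 ≤ k → t k ≤ 2) (K : ℕ) :
    Phi t = (∑ k ∈ Finset.range K, (t (k+1) : ℝ) / 3 ^ (k+1))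
      + (1 / 3 ^ K) * Phi (fun m => t (K + m)) := by
  have hs := summable_phi ht
  have := (Summable.sum_add_tsum_nat_add (f := fun k : ℕ => (t (k+1) : ℝ) / 3 ^ (k+1)) K hs).symm
  rw [Phi, this]
  congr 1
  rw [Phi, ← tsum_mul_left]
  apply tsum_congr
  intro i
  have h3 : (3:ℝ) ^ (i + K + 1) = 3 ^ K * 3 ^ (i + 1) := by rw [← pow_add]; ring_nf
  rw [show K + (i+1) = i + K + 1 by omega, h3]
  field_simp

lemma floor_phi {t : ℕ → ℕ} (ht : ∀ k, 1 ≤ k → t k ≤ 2)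
    (hnot : ∀ K, ∃ k, K < k ∧ t k ≠ 2) (K : ℕ) :
    ⌊Phi t * 3 ^ K⌋ = (∑ k ∈ Finset.range K, (t (k+1) : ℤ) * 3 ^ (K - 1 - k)) := by
  obtain ⟨k, hkK, hk2⟩ := hnot K
  set R : ℝ := Phi (fun m => t (K + m)) with hR
  have hR0 : 0 ≤ R := Phi_nonneg _
  have hR1 : R < 1 := by
    apply Phi_lt_one (t := fun m => t (K + m)) (fun m hm => ht (K+m) (by omega))
      (k0 := k - K) (by omega)
    rw [show K + (k - K) = k by omega]; exact hk2
  have hsplit := Phi_split ht K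
  have hPsum : (∑ k ∈ Finset.range K, (t (k+1) : ℝ) / 3 ^ (k+1)) * 3 ^ K
      = ∑ k ∈ Finset.range K, (t (k+1) : ℝ) * 3 ^ (K - 1 - k) := by
    rw [Finset.sum_mul]
    apply Finset.sum_congr rfl
    intro k hk
    have hkK : k < K := Finset.mem_range.mp hk
    have : (3:ℝ) ^ K = 3 ^ (k+1) * 3 ^ (K - 1 - k) := by
      rw [← pow_add]; congr 1; omega
    rw [this]
    field_simp
  have key : Phi t * 3 ^ K
      = (∑ k ∈ Finset.range K, (t (k+1) : ℝ) * 3 ^ (K - 1 - k)) + R := by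
    rw [hsplit, add_mul, hPsum, ← hR]
    have h3K : (1:ℝ) / 3 ^ K * R * 3 ^ K = R := by field_simp
    rw [h3K]
  rw [key]
  have hcast : (∑ k ∈ Finset.range K, (t (k+1) : ℝ) * 3 ^ (K - 1 - k))
      = ((∑ k ∈ Finset.range K, (t (k+1) : ℤ) * 3 ^ (K - 1 - k) : ℤ) : ℝ) := by
    push_cast; ring
  rw [hcast]
  rw [Int.floor_eq_iff]
  constructor
  · linarith
  · push_cast; linarith

/-- Digit recovery: canonical digits of `Phi t` agree with `t` when `t` is not
eventually all `2`. -/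
lemma ternaryDigit_Phi {t : ℕ → ℕ} (ht : ∀ k, 1 ≤ k → t k ≤ 2)
    (hnot : ∀ K, ∃ k, K < k ∧ t k ≠ 2) (k : ℕ) (hk : 1 ≤ k) :
    ternaryDigit (Phi t) k = t k := by
  have hlt : Phi t < 1 := by
    obtain ⟨k0, hk0, h2⟩ := hnot 0
    exact Phi_lt_one ht (by omega) h2
  rw [ternaryDigit, if_neg (by linarith)]
  rw [floor_phi ht hnot k]
  obtain ⟨K', rfl⟩ : ∃ K', k = K' + 1 := ⟨k - 1, by omega⟩
  rw [Finset.sum_range_succ]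
  have h1 : ∀ m ∈ Finset.range K', (t (m+1) : ℤ) * 3 ^ (K' + 1 - 1 - m)
      = 3 * ((t (m+1) : ℤ) * 3 ^ (K' - 1 - m)) := by
    intro m hm
    have : K' + 1 - 1 - m = (K' - 1 - m) + 1 := by
      have := Finset.mem_range.mp hm; omega
    rw [this, pow_succ]; ring
  rw [Finset.sum_congr rfl h1, ← Finset.mul_sum]
  have : K' + 1 - 1 - K' = 0 := by omega
  rw [this, pow_zero, mul_one]
  have ht2 : t (K' + 1) ≤ 2 := ht _ (by omega)
  have : ((3 * (∑ m ∈ Finset.range K', (t (m+1) : ℤ) * 3 ^ (K' - 1 - m)) + (t (K'+1) : ℤ))).toNat % 3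
      = t (K' + 1) := by
    set M := ∑ m ∈ Finset.range K', (t (m+1) : ℤ) * 3 ^ (K' - 1 - m) with hM
    have hM0 : 0 ≤ M := Finset.sum_nonneg fun m _ => by positivity
    omega
  exact this

lemma ternaryDigit_le_two (a : ℝ) (k : ℕ) : ternaryDigit a k ≤ 2 := by
  rw [ternaryDigit]
  split
  · exact le_refl 2
  · omega

/-- floor doubling step -/
lemma floor_mul3_step {a : ℝ} (ha0 : 0 ≤ a) (K : ℕ) :
    3 * ⌊a * 3 ^ K⌋ ≤ ⌊a * 3 ^ (K+1)⌋ ∧ ⌊a * 3 ^ (K+1)⌋ < 3 * ⌊a * 3 ^ K⌋ + 3 := by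
  have h1 : (⌊a * 3 ^ K⌋ : ℝ) ≤ a * 3 ^ K := Int.floor_le _
  have h2 : a * 3 ^ K < ⌊a * 3 ^ K⌋ + 1 := Int.lt_floor_add_one _
  constructor
  · rw [show (3:ℤ) * ⌊a * 3 ^ K⌋ = ((3 * ⌊a * 3 ^ K⌋ : ℤ)) by ring]
    apply Int.le_floor.mpr
    push_cast
    rw [pow_succ]
    nlinarith
  · apply Int.floor_lt.mpr
    push_cast
    rw [pow_succ]
    nlinarith

lemma partial_sum_ternary {a : ℝ} (ha0 : 0 ≤ a) (ha1 : a < 1) (K : ℕ) :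
    ∑ k ∈ Finset.range K, (ternaryDigit a (k+1) : ℝ) / 3 ^ (k+1)
      = (⌊a * 3 ^ K⌋ : ℝ) / 3 ^ K := by
  induction K with
  | zero =>
    simp only [Finset.range_zero, Finset.sum_empty, pow_zero, mul_one]
    rw [Int.floor_eq_zero_iff.mpr (Set.mem_Ico.mpr ⟨ha0, ha1⟩)]
    simp
  | succ K ih =>
    rw [Finset.sum_range_succ, ih]
    have hstep := floor_mul3_step ha0 K
    have hd : (ternaryDigit a (K+1) : ℤ) = ⌊a * 3 ^ (K+1)⌋ - 3 * ⌊a * 3 ^ K⌋ := by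
      rw [ternaryDigit, if_neg (by linarith)]
      have hge : 0 ≤ ⌊a * 3 ^ (K+1)⌋ := Int.floor_nonneg.mpr (by positivity)
      have := hstep.1
      have := hstep.2
      have hmod : ⌊a * 3 ^ (K+1)⌋ % 3 = ⌊a * 3 ^ (K+1)⌋ - 3 * ⌊a * 3 ^ K⌋ := by
        omega
      omega
    have hdr : (ternaryDigit a (K+1) : ℝ) = (⌊a * 3 ^ (K+1)⌋ : ℝ) - 3 * ⌊a * 3 ^ K⌋ := by
      exact_mod_cast congrArg (fun z : ℤ => (z : ℝ)) hd
    rw [hdr]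
    have h3 : (3:ℝ) ^ (K+1) = 3 ^ K * 3 := by rw [pow_succ]
    field_simp [h3]
    ring
lemma Phi_ternaryDigit {a : ℝ} (ha : a ∈ Set.Icc (0:ℝ) 1) : Phi (ternaryDigit a) = a := by
  rcases eq_or_lt_of_le ha.2 with heq | hlt
  · rw [heq]
    exact Phi_all_two (fun k _ => by rw [ternaryDigit]; subst heq; simp)
  · have ha0 := ha.1
    rw [Phi]
    apply HasSum.tsum_eq
    rw [hasSum_iff_tendsto_nat_of_nonneg (fun k => by positivity)]
    have heq : ∀ K : ℕ, ∑ k ∈ Finset.range K, (ternaryDigit a (k+1) : ℝ) / 3 ^ (k+1)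
        = (⌊a * 3 ^ K⌋ : ℝ) / 3 ^ K := partial_sum_ternary ha0 hlt
    simp only [heq]
    have hbound : ∀ K : ℕ, |(⌊a * 3 ^ K⌋ : ℝ) / 3 ^ K - a| ≤ (1/3 : ℝ) ^ K := by
      intro K
      have h1 : (⌊a * 3 ^ K⌋ : ℝ) ≤ a * 3 ^ K := Int.floor_le _
      have h2 : a * 3 ^ K < ⌊a * 3 ^ K⌋ + 1 := Int.lt_floor_add_one _
      have h3 : (0:ℝ) < 3 ^ K := by positivity
      rw [abs_le]
      constructor
      · rw [div_pow, one_pow, neg_le, neg_sub, sub_le_iff_le_add, ← add_div,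
          le_div_iff₀ h3]
        linarith
      · rw [div_pow, one_pow, sub_le_iff_le_add, div_le_iff₀ h3]
        have h4 : (1/(3:ℝ)^K) * 3^K = 1 := by field_simp
        nlinarith [h4]
    have htend : Filter.Tendsto (fun K : ℕ => (1/3 : ℝ) ^ K) Filter.atTop (nhds 0) :=
      tendsto_pow_atTop_nhds_zero_of_lt_one (by norm_num) (by norm_num)
    have : Filter.Tendsto (fun K : ℕ => (⌊a * 3 ^ K⌋ : ℝ) / 3 ^ K - a) Filter.atTop (nhds 0) := by
      apply squeeze_zero_norm hbound htend
    have := this.add_const a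
    simpa using this

/-- `S` with the (cancelling) last terms removed. -/
def S' (n i j : ℕ) (t : ℕ → ℕ) : ℤ :=
  (∑ k ∈ Finset.Icc 1 (i + j * n - 1), (t k : ℤ)) -
    ∑ s ∈ Finset.range j, (t (i + s * n) : ℤ)

lemma S_eq_S' {n i : ℕ} (hi : 1 ≤ i) (j : ℕ) (t : ℕ → ℕ) :
    S n i j t = S' n i j t := by
  have hm : 1 ≤ i + j * n := by omega
  obtain ⟨m, hm'⟩ : ∃ m, i + j * n = m + 1 := ⟨i + j * n - 1, by omega⟩
  rw [S, S', hm', Finset.sum_Icc_succ_top (by omega), Finset.sum_range_succ, ← hm']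
  rw [show i + j * n - 1 = m by omega]
  ring

lemma S'_congr {n i j : ℕ} (hn : 1 ≤ n) (hi : 1 ≤ i) {t t' : ℕ → ℕ}
    (h : ∀ m, 1 ≤ m → m < i + j * n → t m = t' m) :
    S' n i j t = S' n i j t' := by
  rw [S', S']
  congr 1
  · apply Finset.sum_congr rfl
    intro m hm
    rw [Finset.mem_Icc] at hm
    rw [h m hm.1 (by omega)]
  · apply Finset.sum_congr rfl
    intro s hs
    rw [Finset.mem_range] at hs
    rw [h (i + s * n) (by omega) (by nlinarith)]

/-- One construction step: the digit at position `k ≥ 1` given the previous digits. -/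
noncomputable def step (n : ℕ) (dig : ℕ → ℕ → ℕ) (k : ℕ) (t : ℕ → ℕ) : ℕ :=
  let i := (k - 1) % n + 1
  let j := (k - 1) / n
  if Even (S' n i j t) then dig i (j + 1) else 2 - dig i (j + 1)

noncomputable def gseq (n : ℕ) (dig : ℕ → ℕ → ℕ) : ℕ → (ℕ → ℕ)
  | 0 => fun _ => 0
  | k + 1 => Function.update (gseq n dig k) (k + 1) (step n dig (k + 1) (gseq n dig k))

noncomputable def build (n : ℕ) (dig : ℕ → ℕ → ℕ) (k : ℕ) : ℕ := gseq n dig k k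

lemma gseq_agree (n : ℕ) (dig : ℕ → ℕ → ℕ) :
    ∀ K m, m ≤ K → gseq n dig K m = build n dig m := by
  intro K
  induction K with
  | zero => intro m hm; rw [Nat.le_zero.mp hm]; rfl
  | succ K ih =>
    intro m hm
    rcases Nat.lt_or_ge m (K + 1) with h | h
    · rw [gseq, Function.update_of_ne (by omega)]
      exact ih m (by omega)
    · have : m = K + 1 := by omega
      subst this; rfl

lemma position_decomp {n i j : ℕ} (hn : 1 ≤ n) (hi : 1 ≤ i) (hin : i ≤ n) :
    (i + j * n - 1) % n + 1 = i ∧ (i + j * n - 1) / n = j := by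
  have h1 : i + j * n - 1 = (i - 1) + j * n := by omega
  constructor
  · rw [h1, Nat.add_mul_mod_self_right, Nat.mod_eq_of_lt (by omega)]
    omega
  · rw [h1, Nat.add_mul_div_right _ _ (by omega), Nat.div_eq_of_lt (by omega)]
    omega

lemma build_eq_step {n : ℕ} (hn : 1 ≤ n) (dig : ℕ → ℕ → ℕ) (k : ℕ) :
    build n dig (k + 1) = step n dig (k + 1) (build n dig) := by
  have h1 : build n dig (k + 1) = step n dig (k + 1) (gseq n dig k) := by
    rw [build, gseq, Function.update_self]
  rw [h1, step, step]
  have hi : 1 ≤ (k + 1 - 1) % n + 1 := by omega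
  have hS : S' n ((k + 1 - 1) % n + 1) ((k + 1 - 1) / n) (gseq n dig k)
      = S' n ((k + 1 - 1) % n + 1) ((k + 1 - 1) / n) (build n dig) := by
    apply S'_congr hn hi
    intro m hm1 hm2
    apply gseq_agree
    have : (k + 1 - 1) % n + 1 + (k + 1 - 1) / n * n = k + 1 := by
      have := Nat.mod_add_div' (k + 1 - 1) n
      omega
    omega
  rw [hS]

lemma build_le_two {n : ℕ} {dig : ℕ → ℕ → ℕ} (hd : ∀ i m, dig i m ≤ 2) (k : ℕ) :
    build n dig k ≤ 2 := by
  cases k with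
  | zero => exact Nat.zero_le 2
  | succ k =>
    rw [build, gseq, Function.update_self, step]
    split
    · exact hd _ _
    · omega

/-- The key identity: at position `i + j*n` the construction realizes digit `dig i (j+1)`
up to the parity of `S`. -/
lemma build_digit {n : ℕ} (hn : 1 ≤ n) (dig : ℕ → ℕ → ℕ) {i : ℕ} (hi : 1 ≤ i)
    (hin : i ≤ n) (j : ℕ) :
    build n dig (i + j * n) =
      if Even (S n i j (build n dig)) then dig i (j + 1) else 2 - dig i (j + 1) := by
  obtain ⟨m, hm⟩ : ∃ m, i + j * n = m + 1 := ⟨i + j * n - 1, by omega⟩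
  rw [hm, build_eq_step hn, step]
  have hd := position_decomp hn hi hin (j := j)
  rw [← hm]
  rw [show (i + j * n - 1) % n + 1 = i from hd.1, show (i + j * n - 1) / n = j from hd.2]
  rw [S_eq_S' hi]

lemma xi_bound {z : ℤ} {x : ℝ} (h0 : 0 ≤ x) (h2 : x ≤ 2) :
    |(xiPerm ^ z) x| ≤ 2 := by
  rw [xiPerm_zpow_apply]
  split <;> rw [abs_le] <;> constructor <;> linarith

lemma xcoord_summable {n i : ℕ} {t : ℕ → ℕ} (ht : ∀ k, 1 ≤ k → t k ≤ 2) (hi : 1 ≤ i) :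
    Summable (fun j : ℕ => ((xiPerm ^ (S n i j t)) ((t (i + j * n) : ℝ))) / 3 ^ (j + 1)) := by
  apply summable_digit_aux
  intro j
  apply xi_bound (by positivity)
  exact_mod_cast ht (i + j * n) (by omega)

lemma S_congr_le {n i j : ℕ} (hi : 1 ≤ i) {t t' : ℕ → ℕ}
    (h : ∀ m, 1 ≤ m → m ≤ i + j * n → t m = t' m) :
    S n i j t = S n i j t' := by
  rw [S, S]
  congr 1
  · apply Finset.sum_congr rfl
    intro m hm
    rw [Finset.mem_Icc] at hm
    rw [h m hm.1 hm.2]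
  · apply Finset.sum_congr rfl
    intro s hs
    rw [Finset.mem_range] at hs
    have hs' : s ≤ j := by omega
    have : i + s * n ≤ i + j * n := by
      have : s * n ≤ j * n := Nat.mul_le_mul_right n hs'
      omega
    rw [h (i + s * n) (by omega) this]

lemma xcoord_congr {n i : ℕ} (hi : 1 ≤ i) {t t' : ℕ → ℕ}
    (h : ∀ k, 1 ≤ k → t k = t' k) : xcoord n i t = xcoord n i t' := by
  rw [xcoord, xcoord]
  apply tsum_congr
  intro j
  rw [S_congr_le hi (fun m hm _ => h m hm), h (i + j * n) (by omega)]

lemma xcoord_build {n : ℕ} (hn : 1 ≤ n) {dig : ℕ → ℕ → ℕ} (hd : ∀ i m, dig i m ≤ 2)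
    {i : ℕ} (hi : 1 ≤ i) (hin : i ≤ n) :
    xcoord n i (build n dig) = Phi (dig i) := by
  rw [xcoord, Phi]
  apply tsum_congr
  intro j
  congr 1
  rw [build_digit hn dig hi hin j, xiPerm_zpow_apply]
  by_cases h : Even (S n i j (build n dig))
  · rw [if_pos h, if_pos h]
  · rw [if_neg h, if_neg h]
    have : ((2 - dig i (j+1) : ℕ) : ℝ) = 2 - (dig i (j+1) : ℝ) := by
      have := hd i (j+1)
      push_cast [Nat.cast_sub this]
      ring
    rw [this]
    ring

lemma even_iff_zmod {z : ℤ} : Even z ↔ ((z : ZMod 2) = 0) := by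
  rw [ZMod.intCast_zmod_eq_zero_iff_dvd]
  constructor
  · rintro ⟨c, hc⟩; exact ⟨c, by omega⟩
  · rintro ⟨c, hc⟩; exact ⟨c, by omega⟩

lemma Icc1_eq_Ioc0 (K : ℕ) : Finset.Icc 1 K = Finset.Ioc 0 K := by
  ext x; simp [Finset.mem_Icc, Finset.mem_Ioc]; omega

lemma col_unique {n i s i' s' : ℕ} (hn : 1 ≤ n) (hi : 1 ≤ i) (hin : i ≤ n)
    (hi' : 1 ≤ i') (hin' : i' ≤ n) (h : i + s * n = i' + s' * n) : i = i' ∧ s = s' := by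
  have h1 := position_decomp (n := n) (i := i) (j := s) hn hi hin
  have h2 := position_decomp (n := n) (i := i') (j := s') hn hi' hin'
  rw [h] at h1
  exact ⟨by omega, by omega⟩

lemma S_mod2 {n : ℕ} (hn : 1 ≤ n) {t t' : ℕ → ℕ} {m i_m j_m : ℕ}
    (him : m = i_m + j_m * n) (him1 : 1 ≤ i_m) (himn : i_m ≤ n)
    (hpt : ∀ k, 1 ≤ k → ((t' k : ZMod 2)) = (t k : ZMod 2) + (if k = m then 1 else 0))
    {i : ℕ} (hi : 1 ≤ i) (hin : i ≤ n) {j : ℕ} (hmle : m ≤ i + j * n) :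
    ((S n i j t' : ℤ) : ZMod 2)
      = ((S n i j t : ℤ) : ZMod 2) + 1 - (if i = i_m ∧ j_m ≤ j then 1 else 0) := by
  have hm1 : 1 ≤ m := by omega
  rw [S, S]
  push_cast
  have hrow : (∑ k ∈ Finset.Icc 1 (i + j * n), (t' k : ZMod 2))
      = (∑ k ∈ Finset.Icc 1 (i + j * n), (t k : ZMod 2)) + 1 := by
    rw [Finset.sum_congr rfl (fun k hk => hpt k (Finset.mem_Icc.mp hk).1),
      Finset.sum_add_distrib, Finset.sum_ite_eq' (Finset.Icc 1 (i + j * n)) m (fun _ => (1 : ZMod 2)),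
      if_pos (Finset.mem_Icc.mpr ⟨hm1, hmle⟩)]
  have hcol : (∑ s ∈ Finset.range (j + 1), (t' (i + s * n) : ZMod 2))
      = (∑ s ∈ Finset.range (j + 1), (t (i + s * n) : ZMod 2))
        + (if i = i_m ∧ j_m ≤ j then 1 else 0) := by
    rw [Finset.sum_congr rfl (fun s _ => hpt (i + s * n) (by omega)),
      Finset.sum_add_distrib]
    congr 1
    have hiff : ∀ s : ℕ, (i + s * n = m) ↔ (i = i_m ∧ s = j_m) := by
      intro s
      constructor
      · intro h
        exact col_unique hn hi hin him1 himn (h.trans him)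
      · rintro ⟨rfl, rfl⟩
        omega
    by_cases hiim : i = i_m
    · have : ∀ s ∈ Finset.range (j+1), (if i + s * n = m then (1 : ZMod 2) else 0)
          = (if s = j_m then (1 : ZMod 2) else 0) := by
        intro s _
        by_cases hs : s = j_m
        · rw [if_pos hs, if_pos (by rw [hiim, hs]; omega)]
        · rw [if_neg hs, if_neg (fun hc => hs ((hiff s).mp hc).2)]
      rw [Finset.sum_congr rfl this,
        Finset.sum_ite_eq' (Finset.range (j+1)) j_m (fun _ => (1 : ZMod 2))]
      by_cases hj : j_m ≤ j
      · rw [if_pos (Finset.mem_range.mpr (by omega)), if_pos ⟨hiim, hj⟩]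
      · rw [if_neg (fun hc => hj (by have := Finset.mem_range.mp hc; omega)),
          if_neg (fun hc => hj hc.2)]
    · have : ∀ s ∈ Finset.range (j+1), (if i + s * n = m then (1 : ZMod 2) else 0)
          = 0 := by
        intro s _
        rw [if_neg]
        rw [hiff s]
        tauto
      rw [Finset.sum_congr rfl this, Finset.sum_const_zero,
        if_neg (by tauto)]
  rw [hrow, hcol]
  ring

lemma S_succ_mod2 {n : ℕ} (hn : 1 ≤ n) {t : ℕ → ℕ} {m : ℕ} (htail : ∀ k, m < k → t k = 2)
    {i j : ℕ} (hi : 1 ≤ i) (hmle : m ≤ i + j * n) :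
    ((S n i (j+1) t : ℤ) : ZMod 2) = ((S n i j t : ℤ) : ZMod 2) := by
  rw [S, S]
  push_cast
  rw [Icc1_eq_Ioc0, Icc1_eq_Ioc0]
  rw [← Finset.sum_Ioc_consecutive (fun k => (t k : ZMod 2)) (Nat.zero_le (i + j * n))
    (by have h := add_one_mul j n; omega : i + j * n ≤ i + (j+1) * n)]
  rw [Finset.sum_range_succ]
  have h1 : (∑ k ∈ Finset.Ioc (i + j * n) (i + (j+1) * n), (t k : ZMod 2)) = 0 := by
    apply Finset.sum_eq_zero
    intro k hk
    rw [Finset.mem_Ioc] at hk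
    rw [htail k (by omega)]
    decide
  have h2 : ((t (i + (j+1) * n) : ZMod 2)) = 0 := by
    rw [htail _ (by have h := add_one_mul j n; omega)]
    decide
  rw [h1, h2]
  ring

lemma zmod2_flip : ∀ c : ZMod 2, (c + 1 = 0 ↔ ¬ c = 0) := by decide

lemma zmod2_sub_cancel (c : ZMod 2) : c + 1 - 1 = c := by ring

/-- The crucial well-definedness step: bumping the digit at the last non-2 position `m`
and replacing the tail of 2's by 0's does not change any coordinate. -/
lemma step_wd {n : ℕ} (hn : 1 ≤ n) {t : ℕ → ℕ} (ht : ∀ k, 1 ≤ k → t k ≤ 2)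
    {m : ℕ} (hm1 : 1 ≤ m) (htm : t m ≤ 1) (htail : ∀ k, m < k → t k = 2)
    {i : ℕ} (hi : 1 ≤ i) (hin : i ≤ n) :
    xcoord n i (fun k => if k < m then t k else if k = m then t m + 1 else 0)
      = xcoord n i t := by
  set t' : ℕ → ℕ := fun k => if k < m then t k else if k = m then t m + 1 else 0 with ht'def
  have hv_lt : ∀ k, k < m → t' k = t k := fun k hk => by simp [ht'def, hk]
  have hv_m : t' m = t m + 1 := by simp [ht'def]
  have hv_gt : ∀ k, m < k → t' k = 0 := fun k hk => by
    simp only [ht'def]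
    rw [if_neg (by omega), if_neg (by omega)]
  have ht'2 : ∀ k, 1 ≤ k → t' k ≤ 2 := by
    intro k hk
    rcases lt_trichotomy k m with h | h | h
    · rw [hv_lt k h]; exact ht k hk
    · subst h; rw [hv_m]; omega
    · rw [hv_gt k h]; omega
  obtain ⟨i_m, j_m, him, him1, himn⟩ :
      ∃ i_m j_m, m = i_m + j_m * n ∧ 1 ≤ i_m ∧ i_m ≤ n := by
    refine ⟨(m-1) % n + 1, (m-1) / n, ?_, by omega, ?_⟩
    · have := Nat.mod_add_div' (m-1) n
      omega
    · have := Nat.mod_lt (m-1) (show 0 < n by omega)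
      omega
  have hpt : ∀ k, 1 ≤ k → ((t' k : ZMod 2)) = (t k : ZMod 2) + (if k = m then 1 else 0) := by
    intro k hk
    rcases lt_trichotomy k m with h | h | h
    · rw [hv_lt k h, if_neg (by omega), add_zero]
    · subst h; rw [hv_m, if_pos rfl]; push_cast; ring
    · rw [hv_gt k h, if_neg (by omega), htail k h, add_zero]
      decide
  by_cases hii : i = i_m
  · -- the column containing m
    subst hii
    have hs0' : S n i j_m t' = S n i j_m t := by
      rw [S_eq_S' hi, S_eq_S' hi]
      apply S'_congr hn hi
      intro k hk1 hk2
      rw [← him] at hk2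
      exact hv_lt k hk2
    set s0 : ℤ := S n i j_m t with hs0
    have hconst : ∀ j, j_m ≤ j → ((S n i j t : ℤ) : ZMod 2) = ((s0 : ℤ) : ZMod 2) := by
      intro j hj
      induction j, hj using Nat.le_induction with
      | base => rfl
      | succ j hj ihj =>
        rw [← ihj]
        apply S_succ_mod2 hn htail hi
        have := Nat.mul_le_mul_right n hj
        omega
    set ε : ℝ := if Even s0 then 1 else -1 with hε
    set G : ℕ → ℝ := fun j =>
      if j < j_m then 0 else if j = j_m then ε / 3 ^ (j_m + 1) else (-2*ε) / 3 ^ (j + 1)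
      with hG
    have hterm : ∀ j : ℕ,
        ((xiPerm ^ (S n i j t')) ((t' (i + j * n) : ℝ))) / 3 ^ (j + 1)
        = ((xiPerm ^ (S n i j t)) ((t (i + j * n) : ℝ))) / 3 ^ (j + 1) + G j := by
      intro j
      rcases lt_trichotomy j j_m with h | h | h
      · -- below m
        have hlt : i + j * n < m := by
          have h1 : (j+1) * n ≤ j_m * n := Nat.mul_le_mul_right n (by omega)
          have h2 := add_one_mul j n
          omega
        have hSeq : S n i j t' = S n i j t :=
          (S_congr_le hi (fun k hk1 hk2 => (hv_lt k (by omega)).symm)).symm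
        rw [hSeq, hv_lt _ hlt, hG]
        simp only [if_pos h]
        ring
      · -- the position m itself
        subst h
        have hpos : i + j * n = m := him.symm
        rw [hs0'.trans hs0.symm] at *
        rw [hpos, hv_m, hG]
        simp only [lt_irrefl, if_neg (lt_irrefl _), if_pos rfl]
        rw [xiPerm_zpow_apply, xiPerm_zpow_apply]
        rw [show S n i j t = s0 from hs0.symm ▸ rfl]
        by_cases hE : Even s0
        · rw [if_pos hE, if_pos hE, hε, if_pos hE]
          push_cast
          ring
        · rw [if_neg hE, if_neg hE, hε, if_neg hE]
          push_cast
          ring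
      · -- above m
        have hgt : m < i + j * n := by
          have h1 : (j_m+1) * n ≤ j * n := Nat.mul_le_mul_right n (by omega)
          have h2 := add_one_mul j_m n
          omega
        have hmle : m ≤ i + j * n := le_of_lt hgt
        have hS2 := S_mod2 hn him him1 himn hpt hi hin hmle
        rw [if_pos ⟨rfl, by omega⟩, zmod2_sub_cancel] at hS2
        have hpar : Even (S n i j t') ↔ Even s0 := by
          rw [even_iff_zmod, even_iff_zmod, hS2, hconst j (by omega)]
        have hpar2 : Even (S n i j t) ↔ Even s0 := by
          rw [even_iff_zmod, even_iff_zmod, hconst j (by omega)]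
        rw [hv_gt _ hgt, htail _ hgt, xiPerm_zpow_apply, xiPerm_zpow_apply, hG]
        simp only [if_neg (by omega : ¬ j < j_m), if_neg (by omega : ¬ j = j_m)]
        by_cases hE : Even s0
        · rw [if_pos (hpar.mpr hE), if_pos (hpar2.mpr hE), hε, if_pos hE]
          push_cast
          ring
        · rw [if_neg (fun c => hE (hpar.mp c)), if_neg (fun c => hE (hpar2.mp c)),
            hε, if_neg hE]
          push_cast
          ring
    have hsum : Summable (fun j : ℕ =>
        ((xiPerm ^ (S n i j t)) ((t (i + j * n) : ℝ))) / 3 ^ (j + 1)) :=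
      xcoord_summable ht hi
    have hsum' : Summable (fun j : ℕ =>
        ((xiPerm ^ (S n i j t')) ((t' (i + j * n) : ℝ))) / 3 ^ (j + 1)) :=
      xcoord_summable ht'2 hi
    have hGsum : Summable G := by
      have : G = fun j => ((xiPerm ^ (S n i j t')) ((t' (i + j * n) : ℝ))) / 3 ^ (j + 1)
          - ((xiPerm ^ (S n i j t)) ((t (i + j * n) : ℝ))) / 3 ^ (j + 1) := by
        funext j
        rw [hterm j]
        ring
      rw [this]
      exact hsum'.sub hsum
    have htsumG : ∑' j, G j = 0 := by
      rw [← Summable.sum_add_tsum_nat_add (j_m + 1) hGsum]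
      have h1 : ∑ j ∈ Finset.range (j_m + 1), G j = ε / 3 ^ (j_m + 1) := by
        rw [Finset.sum_range_succ]
        have : ∑ j ∈ Finset.range j_m, G j = 0 := by
          apply Finset.sum_eq_zero
          intro j hj
          rw [hG]
          simp only [if_pos (Finset.mem_range.mp hj)]
        rw [this, zero_add, hG]
        simp only [lt_irrefl, if_neg (lt_irrefl _), if_pos rfl]
        norm_num
      have h2 : ∑' k : ℕ, G (k + (j_m + 1)) = -ε / 3 ^ (j_m + 1) := by
        have heq : ∀ k : ℕ, G (k + (j_m + 1)) = ((-2*ε) / 3 ^ (j_m + 1)) / 3 ^ (k + 1) := by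
          intro k
          rw [hG]
          simp only [if_neg (by omega : ¬ k + (j_m + 1) < j_m),
            if_neg (by omega : ¬ k + (j_m + 1) = j_m)]
          rw [show k + (j_m + 1) + 1 = (j_m + 1) + (k + 1) by omega, pow_add, div_div]
        rw [tsum_congr heq, tsum_geom_c]
        ring
      rw [h1, h2]
      ring
    rw [xcoord, xcoord, tsum_congr hterm, Summable.tsum_add hsum hGsum, htsumG, add_zero]
  · -- a column not containing m
    rw [xcoord, xcoord]
    apply tsum_congr
    intro j
    rcases lt_trichotomy (i + j * n) m with h | h | h
    · have hSeq : S n i j t' = S n i j t :=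
        (S_congr_le hi (fun k hk1 hk2 => (hv_lt k (by omega)).symm)).symm
      rw [hSeq, hv_lt _ h]
    · exact absurd (col_unique hn hi hin him1 himn (h.trans him)).1 hii
    · have hS2 := S_mod2 hn him him1 himn hpt hi hin (le_of_lt h)
      rw [if_neg (fun c => hii c.1), sub_zero] at hS2
      have hpar : Even (S n i j t') ↔ ¬ Even (S n i j t) := by
        rw [even_iff_zmod, even_iff_zmod, hS2]
        exact zmod2_flip _
      rw [hv_gt _ h, htail _ h, xiPerm_zpow_apply, xiPerm_zpow_apply]
      by_cases hE : Even (S n i j t)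
      · rw [if_pos hE, if_neg (fun c => (hpar.mp c) hE)]
        norm_num
      · rw [if_neg hE, if_pos (hpar.mpr hE)]
        norm_num

lemma Phi_step {t : ℕ → ℕ} (ht : ∀ k, 1 ≤ k → t k ≤ 2)
    {m : ℕ} (hm1 : 1 ≤ m) (htm : t m ≤ 1) (htail : ∀ k, m < k → t k = 2) :
    Phi (fun k => if k < m then t k else if k = m then t m + 1 else 0) = Phi t := by
  set t' : ℕ → ℕ := fun k => if k < m then t k else if k = m then t m + 1 else 0 with ht'def
  have ht'2 : ∀ k, 1 ≤ k → t' k ≤ 2 := by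
    intro k hk
    simp only [ht'def]
    split
    · exact ht k hk
    · split <;> omega
  rw [Phi_split ht m, Phi_split ht'2 m]
  have htail1 : Phi (fun k => t (m + k)) = 1 :=
    Phi_all_two (fun k hk => htail (m + k) (by omega))
  have htail0 : Phi (fun k => t' (m + k)) = 0 := by
    rw [Phi]
    have hz : ∀ k : ℕ, (((fun k => t' (m + k)) (k+1) : ℕ) : ℝ) / 3 ^ (k+1) = 0 := by
      intro k
      have h0 : t' (m + (k+1)) = 0 := by
        simp only [ht'def]
        rw [if_neg (by omega), if_neg (by omega)]
      simp only [h0]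
      norm_num
    rw [tsum_congr hz, tsum_zero]
  rw [htail0, htail1]
  obtain ⟨M, rfl⟩ : ∃ M, m = M + 1 := ⟨m - 1, by omega⟩
  rw [Finset.sum_range_succ, Finset.sum_range_succ]
  have hB : ∀ k ∈ Finset.range M, (t' (k+1) : ℝ) / 3 ^ (k+1) = (t (k+1) : ℝ) / 3 ^ (k+1) := by
    intro k hk
    have := Finset.mem_range.mp hk
    have hv : t' (k+1) = t (k+1) := by
      simp only [ht'def]
      rw [if_pos (by omega)]
    rw [hv]
  rw [Finset.sum_congr rfl hB]
  have hvm : t' (M + 1) = t (M + 1) + 1 := by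
    simp only [ht'def]
    rw [if_neg (by omega)]
    simp
  rw [hvm]
  push_cast
  ring


/-- the `n`-dimensional Peano curve is surjective onto `[0,1]^n`. -/
theorem peano_curve_surjective (n : ℕ) (hn : 2 ≤ n) (a : Fin n → ℝ)
    (ha : ∀ i, a i ∈ Set.Icc (0 : ℝ) 1) :
    ∃ t ∈ Set.Icc (0 : ℝ) 1, ∀ i : Fin n, peanoCoord n (i.val + 1) t = a i := by
  have hn1 : 1 ≤ n := by omega
  have hnpos : 0 < n := by omega
  set dig : ℕ → ℕ → ℕ :=
    fun i m => ternaryDigit (a ⟨(i - 1) % n, Nat.mod_lt _ hnpos⟩) m with hdig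
  have hd : ∀ i m, dig i m ≤ 2 := fun i m => ternaryDigit_le_two _ _
  set t : ℕ → ℕ := build n dig with htb
  have ht : ∀ k, 1 ≤ k → t k ≤ 2 := fun k _ => build_le_two hd k
  have hx : ∀ i : Fin n, xcoord n (i.val + 1) t = a i := by
    intro i
    rw [htb, xcoord_build hn1 hd (by omega) i.isLt]
    have hfin : (⟨(i.val + 1 - 1) % n, Nat.mod_lt _ hnpos⟩ : Fin n) = i := by
      apply Fin.ext
      simp [Nat.mod_eq_of_lt i.isLt]
    have hdigeq : dig (i.val + 1) = ternaryDigit (a i) := by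
      funext m
      simp only [hdig]
      rw [hfin]
    rw [hdigeq, Phi_ternaryDigit (ha i)]
  refine ⟨Phi t, ⟨Phi_nonneg t, Phi_le_one ht⟩, ?_⟩
  intro i
  have hi1 : 1 ≤ i.val + 1 := by omega
  have hin : i.val + 1 ≤ n := i.isLt
  rw [peanoCoord, ← hx i]
  by_cases hev : ∀ K, ∃ k, K < k ∧ t k ≠ 2
  · exact xcoord_congr hi1 (fun k hk => ternaryDigit_Phi ht hev k hk)
  · push_neg at hev
    obtain ⟨K, hK'⟩ := hev
    by_cases hall : ∀ k, 1 ≤ k → t k = 2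
    · have h1 : Phi t = 1 := Phi_all_two hall
      apply xcoord_congr hi1
      intro k hk
      rw [h1, ternaryDigit, if_pos rfl, hall k hk]
    · push_neg at hall
      obtain ⟨k0, hk01, hk0⟩ := hall
      have hk0K : k0 ≤ K := by
        by_contra h
        exact hk0 (hK' k0 (by omega))
      set m := Nat.findGreatest (fun k => t k ≠ 2) K with hmdef
      have hm1 : 1 ≤ m := le_trans hk01 (Nat.le_findGreatest hk0K hk0)
      have hmP : t m ≠ 2 :=
        Nat.findGreatest_of_ne_zero (P := fun k => t k ≠ 2) hmdef.symm (by omega)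
      have htm : t m ≤ 1 := by
        have := ht m hm1
        omega
      have htail : ∀ k, m < k → t k = 2 := by
        intro k hk
        rcases le_or_gt k K with h | h
        · by_contra hne
          exact (Nat.findGreatest_is_greatest (hmdef ▸ hk) h) hne
        · exact hK' k h
      set t2 : ℕ → ℕ := fun k => if k < m then t k else if k = m then t m + 1 else 0
        with ht2def
      have ht2d : ∀ k, 1 ≤ k → t2 k ≤ 2 := by
        intro k hk
        simp only [ht2def]
        split
        · exact ht k hk
        · split <;> omega
      have hnot2 : ∀ K', ∃ k, K' < k ∧ t2 k ≠ 2 := by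
        intro K'
        refine ⟨max K' m + 1, by omega, ?_⟩
        simp only [ht2def]
        rw [if_neg (by omega), if_neg (by omega)]
        omega
      have hPhi2 : Phi t2 = Phi t := Phi_step ht hm1 htm htail
      have hdg : ∀ k, 1 ≤ k → ternaryDigit (Phi t) k = t2 k := by
        intro k hk
        rw [← hPhi2]
        exact ternaryDigit_Phi ht2d hnot2 k hk
      calc xcoord n (i.val + 1) (ternaryDigit (Phi t))
          = xcoord n (i.val + 1) t2 := xcoord_congr hi1 hdg
        _ = xcoord n (i.val + 1) t := step_wd hn1 ht hm1 htm htail hi1 hin
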